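/- If (U₁, U₂) is a type III quantum matrix pair with parameters q, r, then (U₁^n, U₂^n) is a type III quantum matrix pair with parameters q^{n²}, r^n, for all integers n. In particular α₁(n)β₂(n) = q^{n²} β₂(n) γ₁(n), where αᵢ(n) = αᵢ^n, γᵢ(n) = γᵢ^n, βᵢ(n) = [n]_r βᵢγᵢ^{n-1}. -/

import Mathlib

section helpers
variable {k A : Type*} [Field k] [Ring A] [Algebra k A]

lemma skewA (u v : Aˣ) (x : A) (s : k) (hs : s ≠ 0)
    (h : (u : A) * x = s • (x * (v : A))) (n : ℤ) :
    ((u ^ n : Aˣ) : A) * x = s ^ n • (x * ((v ^ n : Aˣ) : A)) := by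
  have hinv : ((u⁻¹ : Aˣ) : A) * x = s⁻¹ • (x * ((v⁻¹ : Aˣ) : A)) := by
    have h1 : x = s • ((↑u⁻¹ : A) * (x * ↑v)) := by
      calc x = (↑u⁻¹ : A) * (↑u * x) := by rw [← mul_assoc]; simp
        _ = s • ((↑u⁻¹ : A) * (x * ↑v)) := by rw [h, mul_smul_comm]
    have h2 : x * (↑v⁻¹ : A) = s • ((↑u⁻¹ : A) * x) := by
      calc x * (↑v⁻¹ : A) = (s • ((↑u⁻¹ : A) * (x * ↑v))) * ↑v⁻¹ := by rw [← h1]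
        _ = s • ((↑u⁻¹ : A) * x * (↑v * ↑v⁻¹)) := by
              rw [smul_mul_assoc, mul_assoc, mul_assoc, mul_assoc]
        _ = s • ((↑u⁻¹ : A) * x) := by simp
    rw [h2, smul_smul, inv_mul_cancel₀ hs, one_smul]
  induction n using Int.induction_on with
  | zero => simp
  | succ m ih =>
      rw [zpow_add_one, Units.val_mul, mul_assoc, h, mul_smul_comm, ← mul_assoc, ih,
        smul_mul_assoc, smul_smul, mul_assoc, ← Units.val_mul, ← zpow_add_one,
        zpow_add_one₀ hs, mul_comm (s^(m:ℤ)) s]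
  | pred m ih =>
      rw [zpow_sub_one, Units.val_mul, mul_assoc, hinv, mul_smul_comm, ← mul_assoc, ih,
        smul_mul_assoc, smul_smul, mul_assoc, ← Units.val_mul, ← zpow_sub_one,
        zpow_sub_one₀ hs, mul_comm (s^(-(m:ℤ))) s⁻¹]

lemma skewB (u v : Aˣ) (x : A) (s : k) (hs : s ≠ 0)
    (h : x * (u : A) = s • ((v : A) * x)) (n : ℤ) :
    x * ((u ^ n : Aˣ) : A) = s ^ n • (((v ^ n : Aˣ) : A) * x) := by
  have hinv : x * ((u⁻¹ : Aˣ) : A) = s⁻¹ • (((v⁻¹ : Aˣ) : A) * x) := by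
    have h1 : x = s • ((↑v : A) * (x * ↑u⁻¹)) := by
      calc x = (x * (↑u : A)) * ↑u⁻¹ := by rw [mul_assoc]; simp
        _ = s • ((↑v : A) * x * ↑u⁻¹) := by rw [h, smul_mul_assoc]
        _ = s • ((↑v : A) * (x * ↑u⁻¹)) := by rw [mul_assoc]
    have h2 : (↑v⁻¹ : A) * x = s • (x * (↑u⁻¹ : A)) := by
      calc (↑v⁻¹ : A) * x = ↑v⁻¹ * (s • ((↑v : A) * (x * ↑u⁻¹))) := by rw [← h1]
        _ = s • ((↑v⁻¹ * ↑v : A) * (x * ↑u⁻¹)) := by rw [mul_smul_comm, mul_assoc]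
        _ = s • (x * (↑u⁻¹ : A)) := by simp
    rw [h2, smul_smul, inv_mul_cancel₀ hs, one_smul]
  induction n using Int.induction_on with
  | zero => simp
  | succ m ih =>
      rw [zpow_add_one, Units.val_mul, ← mul_assoc, ih, smul_mul_assoc, mul_assoc, h,
        mul_smul_comm, smul_smul, ← mul_assoc, ← Units.val_mul, ← zpow_add_one,
        zpow_add_one₀ hs]
  | pred m ih =>
      rw [zpow_sub_one, Units.val_mul, ← mul_assoc, ih, smul_mul_assoc, mul_assoc, hinv,
        mul_smul_comm, smul_smul, ← mul_assoc, ← Units.val_mul, ← zpow_sub_one,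
        zpow_sub_one₀ hs]

lemma skewUU (u w : Aˣ) (s : k) (hs : s ≠ 0)
    (h : (u : A) * (w : A) = s • ((w : A) * (u : A))) (m l : ℤ) :
    ((u ^ m : Aˣ) : A) * ((w ^ l : Aˣ) : A)
      = s ^ (l * m) • (((w ^ l : Aˣ) : A) * ((u ^ m : Aˣ) : A)) := by
  have h1 := skewB w w ((u : A)) s hs h l
  have h2 := skewA u u (((w ^ l : Aˣ) : A)) (s ^ l) (zpow_ne_zero l hs) h1 m
  rw [h2, ← zpow_mul]

end helpers


/-- The type III relations with parameters `q`, `r`: internal relations (ID2),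
(IND2) and mutual relations (MD2), (MND). -/
def TypeIIIRel {k A : Type*} [Field k] [Ring A] [Algebra k A] (q r : k)
    (a1 b1 c1 a2 b2 c2 : A) : Prop :=
  a1 * c1 = c1 * a1 ∧ a2 * c2 = c2 * a2 ∧
  a1 * b1 = r • (b1 * c1) ∧ a2 * b2 = r • (b2 * c2) ∧
  a1 * a2 = q • (a2 * a1) ∧ a1 * c2 = q⁻¹ • (c2 * a1) ∧
  a2 * c1 = q • (c1 * a2) ∧ c1 * c2 = q • (c2 * c1) ∧
  a1 * b2 = q • (b2 * c1) ∧ b1 * c2 = q • (a2 * b1)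

/-- If `(U₁, U₂)` is a type III quantum matrix pair with parameters `q, r`, then
`(U₁ⁿ, U₂ⁿ)` is a type III quantum matrix pair with parameters `q^{n²}, rⁿ`,
where the entries of `Uᵢⁿ` are `αᵢⁿ`, `[n]_r βᵢ γᵢ^{n-1}`, `γᵢⁿ`. In particular
`α₁(n) β₂(n) = q^{n²} β₂(n) γ₁(n)`. -/
theorem typeIII_new_pairs {k A : Type*} [Field k] [Ring A] [Algebra k A]
    (q r : k) (hq0 : q ≠ 0) (hr0 : r ≠ 0) (hr1 : r ≠ 1)
    (α₁ γ₁ α₂ γ₂ : Aˣ) (β₁ β₂ : A)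
    (hrel : TypeIIIRel q r (α₁ : A) β₁ (γ₁ : A) (α₂ : A) β₂ (γ₂ : A)) :
    ∀ n : ℤ,
      TypeIIIRel (q ^ (n * n)) (r ^ n)
        ((α₁ ^ n : Aˣ) : A) (((1 - r ^ n) / (1 - r)) • (β₁ * ((γ₁ ^ (n - 1) : Aˣ) : A)))
        ((γ₁ ^ n : Aˣ) : A)
        ((α₂ ^ n : Aˣ) : A) (((1 - r ^ n) / (1 - r)) • (β₂ * ((γ₂ ^ (n - 1) : Aˣ) : A)))
        ((γ₂ ^ n : Aˣ) : A) ∧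
      ((α₁ ^ n : Aˣ) : A) * (((1 - r ^ n) / (1 - r)) • (β₂ * ((γ₂ ^ (n - 1) : Aˣ) : A)))
        = q ^ (n * n) • ((((1 - r ^ n) / (1 - r)) • (β₂ * ((γ₂ ^ (n - 1) : Aˣ) : A))) *
            ((γ₁ ^ n : Aˣ) : A)) := by
  
  obtain ⟨h11, h22, hb1, hb2, haa, hac2, hac1, hcc, hab2, hbc2⟩ := hrel
  intro n
  set R : k := (1 - r ^ n) / (1 - r) with hR
  -- the key mixed relation (a1 b2), proved once and reused
  have key : ((α₁ ^ n : Aˣ) : A) * (R • (β₂ * ((γ₂ ^ (n - 1) : Aˣ) : A)))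
      = q ^ (n * n) • ((R • (β₂ * ((γ₂ ^ (n - 1) : Aˣ) : A))) * ((γ₁ ^ n : Aˣ) : A)) := by
    have hA := skewA α₁ γ₁ β₂ q hq0 hab2 n
    have hG := skewUU γ₁ γ₂ q hq0 hcc n (n - 1)
    calc ((α₁ ^ n : Aˣ) : A) * (R • (β₂ * ((γ₂ ^ (n - 1) : Aˣ) : A)))
        = R • (((α₁ ^ n : Aˣ) : A) * β₂ * ((γ₂ ^ (n - 1) : Aˣ) : A)) := by
          rw [mul_smul_comm, mul_assoc]
      _ = (R * q ^ n) • (β₂ * (((γ₁ ^ n : Aˣ) : A) * ((γ₂ ^ (n - 1) : Aˣ) : A))) := by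
          rw [hA, smul_mul_assoc, smul_smul, mul_assoc]
      _ = (R * q ^ n * q ^ ((n - 1) * n)) •
            (β₂ * ((γ₂ ^ (n - 1) : Aˣ) : A) * ((γ₁ ^ n : Aˣ) : A)) := by
          rw [hG, mul_smul_comm, smul_smul, mul_assoc, mul_assoc]
      _ = q ^ (n * n) • ((R • (β₂ * ((γ₂ ^ (n - 1) : Aˣ) : A))) * ((γ₁ ^ n : Aˣ) : A)) := by
          rw [smul_mul_assoc, smul_smul]
          congr 1
          rw [mul_assoc, ← zpow_add₀ hq0, show n + (n - 1) * n = n * n from by ring,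
            mul_comm]
  refine ⟨⟨?_, ?_, ?_, ?_, ?_, ?_, ?_, ?_, key, ?_⟩, key⟩
  · -- a1 c1 commute
    have := skewUU α₁ γ₁ (1:k) one_ne_zero (by rw [one_smul]; exact h11) n n
    simpa using this
  · have := skewUU α₂ γ₂ (1:k) one_ne_zero (by rw [one_smul]; exact h22) n n
    simpa using this
  · -- a1 b1
    have hA := skewA α₁ γ₁ β₁ r hr0 hb1 n
    have hcp : ((γ₁ ^ n : Aˣ) : A) * ((γ₁ ^ (n - 1) : Aˣ) : A)
        = ((γ₁ ^ (n - 1) : Aˣ) : A) * ((γ₁ ^ n : Aˣ) : A) := by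
      rw [← Units.val_mul, ← Units.val_mul, ← zpow_add, ← zpow_add, add_comm]
    rw [mul_smul_comm, ← mul_assoc, hA, smul_mul_assoc, smul_smul, mul_assoc, hcp,
      smul_mul_assoc, smul_smul, mul_comm R (r ^ n), mul_assoc]
  · -- a2 b2
    have hA := skewA α₂ γ₂ β₂ r hr0 hb2 n
    have hcp : ((γ₂ ^ n : Aˣ) : A) * ((γ₂ ^ (n - 1) : Aˣ) : A)
        = ((γ₂ ^ (n - 1) : Aˣ) : A) * ((γ₂ ^ n : Aˣ) : A) := by
      rw [← Units.val_mul, ← Units.val_mul, ← zpow_add, ← zpow_add, add_comm]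
    rw [mul_smul_comm, ← mul_assoc, hA, smul_mul_assoc, smul_smul, mul_assoc, hcp,
      smul_mul_assoc, smul_smul, mul_comm R (r ^ n), mul_assoc]
  · -- a1 a2
    have := skewUU α₁ α₂ q hq0 haa n n
    simpa using this
  · -- a1 c2 with q⁻¹
    have := skewUU α₁ γ₂ q⁻¹ (inv_ne_zero hq0) hac2 n n
    rw [this, inv_zpow]
  · -- a2 c1
    have := skewUU α₂ γ₁ q hq0 hac1 n n
    simpa using this
  · -- c1 c2
    have := skewUU γ₁ γ₂ q hq0 hcc n n
    simpa using this
  · -- b1 c2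
    have hB := skewB γ₂ α₂ β₁ q hq0 hbc2 n
    have hG := skewUU γ₁ γ₂ q hq0 hcc (n - 1) n
    calc (R • (β₁ * ((γ₁ ^ (n - 1) : Aˣ) : A))) * ((γ₂ ^ n : Aˣ) : A)
        = R • (β₁ * (((γ₁ ^ (n - 1) : Aˣ) : A) * ((γ₂ ^ n : Aˣ) : A))) := by
          rw [smul_mul_assoc, mul_assoc]
      _ = (R * q ^ (n * (n - 1))) •
            (β₁ * ((γ₂ ^ n : Aˣ) : A) * ((γ₁ ^ (n - 1) : Aˣ) : A)) := by
          rw [hG, mul_smul_comm, smul_smul, mul_assoc]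
      _ = (R * q ^ (n * (n - 1)) * q ^ n) •
            (((α₂ ^ n : Aˣ) : A) * β₁ * ((γ₁ ^ (n - 1) : Aˣ) : A)) := by
          rw [hB, smul_mul_assoc, smul_smul]
      _ = q ^ (n * n) • (((α₂ ^ n : Aˣ) : A) * (R • (β₁ * ((γ₁ ^ (n - 1) : Aˣ) : A)))) := by
          rw [mul_smul_comm, smul_smul, mul_assoc]
          congr 1
          · rw [← zpow_add₀ hq0, show n * (n - 1) + n = n * n from by ring, mul_comm]
          · rw [mul_assoc]
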